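/- Let R = ℝ[X,Y,Z]/(X² + Y² + Z² − 1), the ring of polynomial functions on the unit sphere S², and write x, y, z for the images of X, Y, Z in R. Suppose {·,·} : R × R → R is a bilinear, antisymmetric bracket satisfying the Jacobi identity and the Leibniz rule {f, gh} = {f,g}h + g{f,h}, and satisfying {x,y} = z, {y,z} = x, {z,x} = y. Then for every finite-dimensional real vector space V and every Lie algebra homomorphism ρ from (R, {·,·}) to the endomorphisms of V with the commutator bracket, one has ρ({f,g}) = 0 for all f, g ∈ R; i.e., there is no nontrivial finite-dimensional Lie representation of the Poisson algebra of polynomials (spherical harmonics) on S². -/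

import Mathlib

open MvPolynomial in
/-- The ring of polynomial functions on the unit sphere `S²`:
`ℝ[X,Y,Z] / (X² + Y² + Z² - 1)`. -/
noncomputable abbrev SphereRing : Type :=
  MvPolynomial (Fin 3) ℝ ⧸
    Ideal.span {(X 0 : MvPolynomial (Fin 3) ℝ) ^ 2 + X 1 ^ 2 + X 2 ^ 2 - 1}

open MvPolynomial in
/-- The image of `X` in the sphere ring. -/
noncomputable def sphereX : SphereRing :=
  Ideal.Quotient.mk _ (X 0)

open MvPolynomial in
/-- The image of `Y` in the sphere ring. -/
noncomputable def sphereY : SphereRing :=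
  Ideal.Quotient.mk _ (X 1)

open MvPolynomial in
/-- The image of `Z` in the sphere ring. -/
noncomputable def sphereZ : SphereRing :=
  Ideal.Quotient.mk _ (X 2)


noncomputable def sphPQ : ℕ → SphereRing × SphereRing
  | 0 => (1, 0)
  | (m+1) => (sphereY * (sphPQ m).1 - sphereZ * (sphPQ m).2,
              sphereZ * (sphPQ m).1 + sphereY * (sphPQ m).2)

noncomputable def sphP (m : ℕ) : SphereRing := (sphPQ m).1
noncomputable def sphQ (m : ℕ) : SphereRing := (sphPQ m).2

lemma sphP_zero : sphP 0 = 1 := rfl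
lemma sphQ_zero : sphQ 0 = 0 := rfl
lemma sphP_succ (m : ℕ) : sphP (m+1) = sphereY * sphP m - sphereZ * sphQ m := rfl
lemma sphQ_succ (m : ℕ) : sphQ (m+1) = sphereZ * sphP m + sphereY * sphQ m := rfl

lemma sphere_rel : sphereX ^ 2 + sphereY ^ 2 + sphereZ ^ 2 = (1 : SphereRing) := by
  have h2 : (Ideal.Quotient.mk _ ((MvPolynomial.X 0 : MvPolynomial (Fin 3) ℝ) ^ 2 + MvPolynomial.X 1 ^ 2 + MvPolynomial.X 2 ^ 2 - 1) : SphereRing) = 0 := by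
    rw [Ideal.Quotient.eq_zero_iff_mem]
    exact Ideal.subset_span rfl
  simp only [map_sub, map_add, map_pow, map_one] at h2
  rw [sphereX, sphereY, sphereZ]
  linear_combination h2

lemma sphR1 (m : ℕ) :
    sphereY * sphP (m+1) + sphereZ * sphQ (m+1) = (1 - sphereX^2) * sphP m := by
  rw [sphP_succ, sphQ_succ]
  linear_combination (sphP m) * sphere_rel

lemma sphR2 (m : ℕ) :
    sphereY * sphQ (m+1) - sphereZ * sphP (m+1) = (1 - sphereX^2) * sphQ m := by
  rw [sphP_succ, sphQ_succ]
  linear_combination (sphQ m) * sphere_rel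

/-- Bundle of the bracket data. -/
structure BrData where
  br : SphereRing →ₗ[ℝ] SphereRing →ₗ[ℝ] SphereRing
  anti : ∀ f g : SphereRing, br f g = - br g f
  leibniz : ∀ f g h : SphereRing, br f (g * h) = br f g * h + g * br f h
  hxy : br sphereX sphereY = sphereZ
  hyz : br sphereY sphereZ = sphereX
  hzx : br sphereZ sphereX = sphereY

namespace BrData

variable (B : BrData)

lemma self_zero (f : SphereRing) : B.br f f = 0 := by
  have h := B.anti f f
  have h2 : (2:ℝ) • B.br f f = 0 := by
    rw [two_smul]; nth_rewrite 2 [h]; exact add_neg_cancel _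
  have h3 : B.br f f = (1/2:ℝ) • ((2:ℝ) • B.br f f) := by
    rw [smul_smul]; norm_num
  rw [h3, h2, smul_zero]

lemma one_right (f : SphereRing) : B.br f 1 = 0 := by
  have h := B.leibniz f 1 1
  rw [mul_one, one_mul] at h
  linear_combination -h

lemma leibniz' (f g h : SphereRing) :
    B.br (g * h) f = B.br g f * h + g * B.br h f := by
  rw [B.anti (g*h) f, B.leibniz f g h, B.anti g f, B.anti h f]
  ring

lemma hyx : B.br sphereY sphereX = -sphereZ := by rw [B.anti, B.hxy]
lemma hzy : B.br sphereZ sphereY = -sphereX := by rw [B.anti, B.hyz]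
lemma hxz : B.br sphereX sphereZ = -sphereY := by rw [B.anti, B.hzx]

lemma brx_pow (n : ℕ) : B.br sphereX (sphereX ^ n) = 0 := by
  induction n with
  | zero => simpa using B.one_right sphereX
  | succ n ih =>
    simp only [pow_succ]; rw [B.leibniz, ih, B.self_zero]
    ring

lemma bry_pow (n : ℕ) :
    B.br sphereY (sphereX ^ (n+1)) = -(((n:SphereRing)+1) * (sphereX ^ n * sphereZ)) := by
  induction n with
  | zero => rw [pow_one, B.hyx]; push_cast; ring
  | succ n ih =>
    simp only [pow_succ]; simp only [pow_succ] at ih; rw [B.leibniz, ih, B.hyx]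
    push_cast
    ring

lemma brz_pow (n : ℕ) :
    B.br sphereZ (sphereX ^ (n+1)) = ((n:SphereRing)+1) * (sphereX ^ n * sphereY) := by
  induction n with
  | zero => rw [pow_one, B.hzx]; push_cast; ring
  | succ n ih =>
    simp only [pow_succ]; simp only [pow_succ] at ih; rw [B.leibniz, ih, B.hzx]
    push_cast
    ring

lemma brx_PQ (m : ℕ) :
    B.br sphereX (sphP m) = (m:SphereRing) * sphQ m ∧
    B.br sphereX (sphQ m) = -((m:SphereRing) * sphP m) := by
  induction m with
  | zero =>
    constructor
    · rw [sphP_zero, sphQ_zero]; simpa using B.one_right sphereX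
    · rw [sphQ_zero]; simp
  | succ m ih =>
    obtain ⟨ih1, ih2⟩ := ih
    constructor
    · rw [sphP_succ, map_sub, B.leibniz, B.leibniz, ih1, ih2, B.hxy, B.hxz, sphQ_succ]
      push_cast; ring
    · rw [sphQ_succ, map_add, B.leibniz, B.leibniz, ih1, ih2, B.hxy, B.hxz, sphP_succ]
      push_cast; ring

lemma brx_P (m : ℕ) : B.br sphereX (sphP m) = (m:SphereRing) * sphQ m := (B.brx_PQ m).1
lemma brx_Q (m : ℕ) : B.br sphereX (sphQ m) = -((m:SphereRing) * sphP m) := (B.brx_PQ m).2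

lemma bryz_PQ (m : ℕ) :
    B.br sphereY (sphP (m+1)) = -(((m:SphereRing)+1) * (sphereX * sphQ m)) ∧
    B.br sphereY (sphQ (m+1)) = ((m:SphereRing)+1) * (sphereX * sphP m) ∧
    B.br sphereZ (sphP (m+1)) = -(((m:SphereRing)+1) * (sphereX * sphP m)) ∧
    B.br sphereZ (sphQ (m+1)) = -(((m:SphereRing)+1) * (sphereX * sphQ m)) := by
  induction m with
  | zero =>
    rw [sphP_succ, sphQ_succ, sphP_zero, sphQ_zero]
    refine ⟨?_, ?_, ?_, ?_⟩ <;>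
      simp [B.self_zero, B.hyz, B.hzy]
  | succ m ih =>
    obtain ⟨ih1, ih2, ih3, ih4⟩ := ih
    refine ⟨?_, ?_, ?_, ?_⟩
    · rw [sphP_succ (m+1), map_sub, B.leibniz, B.leibniz, ih1, ih2, B.self_zero, B.hyz,
        sphQ_succ m, sphP_succ m]
      push_cast; ring
    · rw [sphQ_succ (m+1), map_add, B.leibniz, B.leibniz, ih1, ih2, B.self_zero, B.hyz,
        sphQ_succ m, sphP_succ m]
      push_cast; ring
    · rw [sphP_succ (m+1), map_sub, B.leibniz, B.leibniz, ih3, ih4, B.self_zero, B.hzy,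
        sphQ_succ m, sphP_succ m]
      push_cast; ring
    · rw [sphQ_succ (m+1), map_add, B.leibniz, B.leibniz, ih3, ih4, B.self_zero, B.hzy,
        sphQ_succ m, sphP_succ m]
      push_cast; ring

lemma bry_P (m : ℕ) :
    B.br sphereY (sphP (m+1)) = -(((m:SphereRing)+1) * (sphereX * sphQ m)) := (B.bryz_PQ m).1
lemma bry_Q (m : ℕ) :
    B.br sphereY (sphQ (m+1)) = ((m:SphereRing)+1) * (sphereX * sphP m) := (B.bryz_PQ m).2.1
lemma brz_P (m : ℕ) :
    B.br sphereZ (sphP (m+1)) = -(((m:SphereRing)+1) * (sphereX * sphP m)) := (B.bryz_PQ m).2.2.1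
lemma brz_Q (m : ℕ) :
    B.br sphereZ (sphQ (m+1)) = -(((m:SphereRing)+1) * (sphereX * sphQ m)) := (B.bryz_PQ m).2.2.2

lemma brpow_left (n : ℕ) (f : SphereRing) :
    B.br (sphereX ^ (n+1)) f = ((n:SphereRing)+1) * (sphereX ^ n * B.br sphereX f) := by
  induction n with
  | zero => rw [pow_one]; push_cast; ring
  | succ n ih =>
    simp only [pow_succ]
    simp only [pow_succ] at ih
    rw [show sphereX ^ n * sphereX * sphereX = (sphereX ^ n * sphereX) * sphereX from rfl, B.leibniz' f (sphereX ^ n * sphereX) sphereX, ih]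
    push_cast; ring

/-- weight-lowering identity, `p`-version, outer derivative. -/
lemma J1p (e m : ℕ) :
    B.br sphereZ (sphereX^(e+1) * sphP (m+1)) - B.br sphereY (sphereX^(e+1) * sphQ (m+1)) =
      ((e+1 : ℕ) : SphereRing) * (sphereX^e * sphP m - sphereX^(e+2) * sphP m)
        - ((2*m+2 : ℕ) : SphereRing) * (sphereX^(e+2) * sphP m) := by
  rw [B.leibniz, B.leibniz, B.bry_pow, B.brz_pow, B.bry_Q, B.brz_P]
  push_cast
  linear_combination (((e:SphereRing)+1) * sphereX^e) * sphR1 m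

/-- weight-lowering identity, `p`-version, inner derivative. -/
lemma J2p (e m : ℕ) :
    B.br (sphereX^(e+1) * sphereZ) (sphP (m+1)) - B.br (sphereX^(e+1) * sphereY) (sphQ (m+1)) =
      (((e+1)*(m+1) : ℕ) : SphereRing) * (sphereX^e * sphP m - sphereX^(e+2) * sphP m)
        - ((2*m+2 : ℕ) : SphereRing) * (sphereX^(e+2) * sphP m) := by
  rw [B.leibniz' (sphQ (m+1)) (sphereX^(e+1)) sphereY,
    B.leibniz' (sphP (m+1)) (sphereX^(e+1)) sphereZ,
    B.brpow_left, B.brpow_left, B.brx_P, B.brx_Q, B.bry_Q, B.brz_P]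
  push_cast
  linear_combination (((e:SphereRing)+1) * ((m:SphereRing)+1) * sphereX^e) * sphR1 m

/-- weight-lowering identity, `q`-version, outer derivative. -/
lemma J1q (e m : ℕ) :
    B.br sphereY (sphereX^(e+1) * sphP (m+1)) + B.br sphereZ (sphereX^(e+1) * sphQ (m+1)) =
      ((e+1 : ℕ) : SphereRing) * (sphereX^e * sphQ m - sphereX^(e+2) * sphQ m)
        - ((2*m+2 : ℕ) : SphereRing) * (sphereX^(e+2) * sphQ m) := by
  rw [B.leibniz, B.leibniz, B.bry_pow, B.brz_pow, B.bry_P, B.brz_Q]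
  push_cast
  linear_combination (((e:SphereRing)+1) * sphereX^e) * sphR2 m

/-- weight-lowering identity, `q`-version, inner derivative. -/
lemma J2q (e m : ℕ) :
    B.br (sphereX^(e+1) * sphereY) (sphP (m+1)) + B.br (sphereX^(e+1) * sphereZ) (sphQ (m+1)) =
      (((e+1)*(m+1) : ℕ) : SphereRing) * (sphereX^e * sphQ m - sphereX^(e+2) * sphQ m)
        - ((2*m+2 : ℕ) : SphereRing) * (sphereX^(e+2) * sphQ m) := by
  rw [B.leibniz' (sphP (m+1)) (sphereX^(e+1)) sphereY,
    B.leibniz' (sphQ (m+1)) (sphereX^(e+1)) sphereZ,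
    B.brpow_left, B.brpow_left, B.brx_P, B.brx_Q, B.bry_P, B.brz_Q]
  push_cast
  linear_combination (((e:SphereRing)+1) * ((m:SphereRing)+1) * sphereX^e) * sphR2 m

/-- the weight-zero identity. -/
lemma S3 (c : ℕ) :
    B.br sphereZ (sphereX^(c+1) * sphereY) - B.br sphereY (sphereX^(c+1) * sphereZ) =
      ((c+1 : ℕ) : SphereRing) * sphereX^c - ((c+3 : ℕ) : SphereRing) * sphereX^(c+2) := by
  rw [B.leibniz, B.leibniz, B.bry_pow, B.brz_pow, B.hzy, B.hyz]
  push_cast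
  linear_combination (((c:SphereRing)+1) * sphereX^c) * sphere_rel

/-- bracket of `x` with the basis elements. -/
lemma brx_mulP (a m : ℕ) :
    B.br sphereX (sphereX^a * sphP m) = (m : SphereRing) * (sphereX^a * sphQ m) := by
  rw [B.leibniz, B.brx_pow, B.brx_P]; ring

lemma brx_mulQ (a m : ℕ) :
    B.br sphereX (sphereX^a * sphQ m) = -((m : SphereRing) * (sphereX^a * sphP m)) := by
  rw [B.leibniz, B.brx_pow, B.brx_Q]; ring

end BrData

/- doubled product identities -/
lemma sphMulYP (m : ℕ) :
    (2 : SphereRing) * (sphereY * sphP (m+1)) = sphP (m+2) + (sphP m - sphereX^2 * sphP m) := by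
  rw [sphP_succ (m+1)]
  linear_combination sphR1 m

lemma sphMulZQ (m : ℕ) :
    (2 : SphereRing) * (sphereZ * sphQ (m+1)) = (sphP m - sphereX^2 * sphP m) - sphP (m+2) := by
  rw [sphP_succ (m+1)]
  linear_combination sphR1 m

lemma sphMulYQ (m : ℕ) :
    (2 : SphereRing) * (sphereY * sphQ (m+1)) = sphQ (m+2) + (sphQ m - sphereX^2 * sphQ m) := by
  rw [sphQ_succ (m+1)]
  linear_combination sphR2 m

lemma sphMulZP (m : ℕ) :
    (2 : SphereRing) * (sphereZ * sphP (m+1)) = sphQ (m+2) - (sphQ m - sphereX^2 * sphQ m) := by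
  rw [sphQ_succ (m+1)]
  linear_combination -(sphR2 m)

lemma sphP_one : sphP 1 = sphereY := by
  rw [sphP_succ, sphP_zero, sphQ_zero]; ring

lemma sphQ_one : sphQ 1 = sphereZ := by
  rw [sphQ_succ, sphP_zero, sphQ_zero]; ring

lemma half_eq (t : SphereRing) : t = (1/2 : ℝ) • ((2 : SphereRing) * t) := by
  rw [show ((2:SphereRing) * t) = t + t by ring, ← two_smul ℝ t, smul_smul]
  norm_num



-- main lemma (appended to t2 content when testing)
set_option maxHeartbeats 4000000 in
set_option synthInstance.maxHeartbeats 400000 in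
lemma BrData.main (B : BrData) (V : Type) [AddCommGroup V] [Module ℝ V]
    [FiniteDimensional ℝ V] (ρ : SphereRing →ₗ[ℝ] Module.End ℝ V)
    (hrep : ∀ f g : SphereRing, ρ (B.br f g) = ρ f * ρ g - ρ g * ρ f) :
    ∀ f g : SphereRing, ρ (B.br f g) = 0 := by
  -- scalar cancellation in `End V`
  have scancel : ∀ (c : ℝ) (w : Module.End ℝ V), c ≠ 0 → c • w = 0 → w = 0 := by
    intro c w hc h
    have hw : w = c⁻¹ • (c • w) := by rw [smul_smul, inv_mul_cancel₀ hc, one_smul]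
    rw [hw, h, smul_zero]
  have hcast : ∀ (n : ℕ) (v : SphereRing), ρ ((n : SphereRing) * v) = (n : ℝ) • ρ v := by
    intro n v
    rw [← nsmul_eq_mul, map_nsmul, Nat.cast_smul_eq_nsmul]
  have kerbr : ∀ f k : SphereRing, ρ k = 0 → ρ (B.br f k) = 0 := by
    intro f k hk; rw [hrep, hk, mul_zero, zero_mul, sub_zero]
  -- the operator `ad (ρ x)`
  set D : Module.End ℝ (Module.End ℝ V) :=
    LinearMap.mulLeft ℝ (ρ sphereX) - LinearMap.mulRight ℝ (ρ sphereX) with hDdef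
  set D2 : Module.End ℝ (Module.End ℝ V) := D ∘ₗ D with hD2def
  have hD : ∀ g : SphereRing, D (ρ g) = ρ (B.br sphereX g) := by
    intro g
    rw [hrep]
    simp only [hDdef, LinearMap.sub_apply, LinearMap.mulLeft_apply, LinearMap.mulRight_apply]
  have hDP : ∀ a m : ℕ, D (ρ (sphereX ^ a * sphP m)) = (m : ℝ) • ρ (sphereX ^ a * sphQ m) := by
    intro a m
    rw [hD, B.brx_mulP a m, hcast]
  have hDQ : ∀ a m : ℕ,
      D (ρ (sphereX ^ a * sphQ m)) = -((m : ℝ) • ρ (sphereX ^ a * sphP m)) := by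
    intro a m
    rw [hD, B.brx_mulQ a m, map_neg, hcast]
  -- Step 1 : high weights are killed
  have hfin : (Set.Finite (D2.HasEigenvalue)) := Module.End.finite_hasEigenvalue _
  have hBadfin : ((fun m : ℕ => -((m : ℝ) ^ 2)) ⁻¹' (D2.HasEigenvalue : Set ℝ)).Finite := by
    apply Set.Finite.preimage _ hfin
    intro m _ n _ h
    simp only at h
    have hmn : (m : ℝ) = n := by
      nlinarith [sq_nonneg ((m : ℝ) - n), sq_nonneg ((m : ℝ) + n)]
    exact_mod_cast hmn
  obtain ⟨M0, hM0⟩ := hBadfin.bddAbove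
  have step1 : ∀ m, M0 + 1 ≤ m → ∀ a,
      ρ (sphereX ^ a * sphP m) = 0 ∧ ρ (sphereX ^ a * sphQ m) = 0 := by
    intro m hm a
    have hnotbad : ¬ D2.HasEigenvalue (-((m : ℝ) ^ 2)) := by
      intro h
      have hmem : m ∈ (fun m : ℕ => -((m : ℝ) ^ 2)) ⁻¹' (D2.HasEigenvalue : Set ℝ) := h
      have := hM0 hmem
      omega
    constructor
    · by_contra hP
      apply hnotbad
      apply Module.End.hasEigenvalue_of_hasEigenvector
        (x := ρ (sphereX ^ a * sphP m))
      refine ⟨Module.End.mem_eigenspace_iff.mpr ?_, hP⟩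
      rw [hD2def, LinearMap.comp_apply, hDP, map_smul, hDQ, smul_neg, smul_smul, ← neg_smul]
      congr 1
      ring
    · by_contra hQ
      apply hnotbad
      apply Module.End.hasEigenvalue_of_hasEigenvector
        (x := ρ (sphereX ^ a * sphQ m))
      refine ⟨Module.End.mem_eigenspace_iff.mpr ?_, hQ⟩
      rw [hD2def, LinearMap.comp_apply, hDQ, map_neg, map_smul, hDP, smul_smul, ← neg_smul]
      congr 1
      ring
  -- Step 2 : downward propagation
  have step2 : ∀ m, 1 ≤ m →
      (∀ a, ρ (sphereX ^ a * sphP (m+1)) = 0 ∧ ρ (sphereX ^ a * sphQ (m+1)) = 0) →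
      ∀ a, ρ (sphereX ^ a * sphP m) = 0 ∧ ρ (sphereX ^ a * sphQ m) = 0 := by
    intro m hm ih
    have solver : ∀ (e : ℕ) (α β : Module.End ℝ V),
        ((e+1 : ℕ) : ℝ) • (α - β) - ((2*m+2 : ℕ) : ℝ) • β = 0 →
        (((e+1)*(m+1) : ℕ) : ℝ) • (α - β) - ((2*m+2 : ℕ) : ℝ) • β = 0 →
        α = 0 := by
      intro e α β h1 h2
      have e1 := sub_eq_zero.mp h1
      have e2 := sub_eq_zero.mp h2
      have e3 : ((((e+1)*(m+1) : ℕ) : ℝ) - ((e+1 : ℕ) : ℝ)) • (α - β) = 0 := by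
        rw [sub_smul, e1, e2, sub_self]
      have hne : ((((e+1)*(m+1) : ℕ) : ℝ) - ((e+1 : ℕ) : ℝ)) ≠ 0 := by
        have hmR : (1 : ℝ) ≤ (m : ℝ) := by exact_mod_cast hm
        push_cast
        nlinarith [Nat.cast_nonneg (α := ℝ) e]
      have hw : α - β = 0 := scancel _ _ hne e3
      have hb : β = 0 := by
        rw [hw, smul_zero] at e1
        exact scancel _ _ (Nat.cast_ne_zero.mpr (by omega) :
          ((2*m+2 : ℕ) : ℝ) ≠ 0) e1.symm
      have := sub_eq_zero.mp hw
      rw [this, hb]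
    intro a
    constructor
    · -- p-part
      have hz := kerbr sphereZ _ (ih (a+1)).1
      have hy := kerbr sphereY _ (ih (a+1)).2
      have hp0 : ρ (sphP (m+1)) = 0 := by
        have := (ih 0).1; rwa [pow_zero, one_mul] at this
      have hq0 : ρ (sphQ (m+1)) = 0 := by
        have := (ih 0).2; rwa [pow_zero, one_mul] at this
      have hz2 := kerbr (sphereX ^ (a+1) * sphereZ) _ hp0
      have hy2 := kerbr (sphereX ^ (a+1) * sphereY) _ hq0
      have t1 := congrArg ρ (B.J1p a m)
      simp only [map_sub, hz, hy, hcast] at t1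
      have h1 := t1.symm.trans (by norm_num : (0 : Module.End ℝ V) - 0 = 0)
      have t2 := congrArg ρ (B.J2p a m)
      simp only [map_sub, hz2, hy2, hcast] at t2
      have h2 := t2.symm.trans (by norm_num : (0 : Module.End ℝ V) - 0 = 0)
      exact solver a _ _ h1 h2
    · -- q-part
      have hy := kerbr sphereY _ (ih (a+1)).1
      have hz := kerbr sphereZ _ (ih (a+1)).2
      have hp0 : ρ (sphP (m+1)) = 0 := by
        have := (ih 0).1; rwa [pow_zero, one_mul] at this
      have hq0 : ρ (sphQ (m+1)) = 0 := by
        have := (ih 0).2; rwa [pow_zero, one_mul] at this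
      have hy2 := kerbr (sphereX ^ (a+1) * sphereY) _ hp0
      have hz2 := kerbr (sphereX ^ (a+1) * sphereZ) _ hq0
      have t1 := congrArg ρ (B.J1q a m)
      simp only [map_add, map_sub, hz, hy, hcast] at t1
      have h1 := t1.symm.trans (by norm_num : (0 : Module.End ℝ V) + 0 = 0)
      have t2 := congrArg ρ (B.J2q a m)
      simp only [map_add, map_sub, hz2, hy2, hcast] at t2
      have h2 := t2.symm.trans (by norm_num : (0 : Module.End ℝ V) + 0 = 0)
      exact solver a _ _ h1 h2
  -- combine: all weights `m ≥ 1` are killed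
  have hrec : ∀ k m, 1 ≤ m → M0 + 1 ≤ m + k → ∀ a,
      ρ (sphereX ^ a * sphP m) = 0 ∧ ρ (sphereX ^ a * sphQ m) = 0 := by
    intro k
    induction k with
    | zero => intro m hm hM; exact step1 m (by omega)
    | succ k ihk =>
      intro m hm hM
      by_cases hc : M0 + 1 ≤ m
      · exact step1 m hc
      · exact step2 m hm (ihk (m+1) (by omega) (by omega))
  have key2 : ∀ m, 1 ≤ m → ∀ a,
      ρ (sphereX ^ a * sphP m) = 0 ∧ ρ (sphereX ^ a * sphQ m) = 0 := by
    intro m hm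
    exact hrec (M0 + 1) m hm (by omega)
  -- Step 3 : weight zero
  have hp1 : ∀ a, ρ (sphereX ^ a * sphereY) = 0 := by
    intro a
    have := (key2 1 le_rfl a).1
    rwa [sphP_one] at this
  have hq1 : ∀ a, ρ (sphereX ^ a * sphereZ) = 0 := by
    intro a
    have := (key2 1 le_rfl a).2
    rwa [sphQ_one] at this
  have hy0 : ρ sphereY = 0 := by
    have := hp1 0; rwa [pow_zero, one_mul] at this
  have hz0 : ρ sphereZ = 0 := by
    have := hq1 0; rwa [pow_zero, one_mul] at this
  have hx0 : ρ sphereX = 0 := by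
    rw [← B.hyz, hrep, hy0, hz0, zero_mul, sub_self]
  have hxrec : ∀ c : ℕ, ((c+3 : ℕ) : ℝ) • ρ (sphereX ^ (c+2)) =
      ((c+1 : ℕ) : ℝ) • ρ (sphereX ^ c) := by
    intro c
    have hk1 := kerbr sphereZ _ (hp1 (c+1))
    have hk2 := kerbr sphereY _ (hq1 (c+1))
    have t := congrArg ρ (B.S3 c)
    simp only [map_sub, hk1, hk2, hcast] at t
    have h := t.symm.trans (by norm_num : (0 : Module.End ℝ V) - 0 = 0)
    exact (sub_eq_zero.mp h).symm
  have hxpow2 : ∀ c : ℕ, (∃ r : ℝ, ρ (sphereX ^ c) = r • ρ 1) ∧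
      (∃ r : ℝ, ρ (sphereX ^ (c+1)) = r • ρ 1) := by
    intro c
    induction c with
    | zero =>
      exact ⟨⟨1, by rw [pow_zero, one_smul]⟩, ⟨0, by rw [pow_one, hx0, zero_smul]⟩⟩
    | succ c ihc =>
      refine ⟨ihc.2, ?_⟩
      obtain ⟨r, hr⟩ := ihc.1
      refine ⟨((c+3 : ℕ) : ℝ)⁻¹ * (((c+1 : ℕ) : ℝ) * r), ?_⟩
      have h := hxrec c
      rw [hr] at h
      calc ρ (sphereX ^ (c+2))
          = ((c+3 : ℕ) : ℝ)⁻¹ • (((c+3 : ℕ) : ℝ) • ρ (sphereX ^ (c+2))) := by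
            rw [smul_smul, inv_mul_cancel₀ (Nat.cast_ne_zero.mpr (by omega)), one_smul]
        _ = _ := by rw [h, smul_smul, smul_smul, mul_assoc]
  have hxpow : ∀ c : ℕ, ∃ r : ℝ, ρ (sphereX ^ c) = r • ρ 1 := fun c => (hxpow2 c).1
  -- the spanning set
  set Bset : Set SphereRing :=
    {v | ∃ a m : ℕ, v = sphereX ^ a * sphP m ∨ v = sphereX ^ a * sphQ m} with hBset
  have hmul : ∀ g : SphereRing, (g = sphereX ∨ g = sphereY ∨ g = sphereZ) →
      ∀ v, v ∈ Submodule.span ℝ Bset → g * v ∈ Submodule.span ℝ Bset := by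
    intro g hg v hv
    refine Submodule.span_induction (p := fun v _ => g * v ∈ Submodule.span ℝ Bset)
      ?_ ?_ ?_ ?_ hv
    · intro w hw
      obtain ⟨a, m, hc | hc⟩ := hw
      · subst hc
        rcases hg with rfl | rfl | rfl
        · rw [show sphereX * (sphereX ^ a * sphP m) = sphereX ^ (a+1) * sphP m from by ring]
          exact Submodule.subset_span ⟨a+1, m, Or.inl rfl⟩
        · cases m with
          | zero =>
            rw [show sphereY * (sphereX ^ a * sphP 0) = sphereX ^ a * sphP 1 from by
              rw [sphP_zero, sphP_one]; ring]
            exact Submodule.subset_span ⟨a, 1, Or.inl rfl⟩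
          | succ m =>
            rw [half_eq (sphereY * (sphereX ^ a * sphP (m+1))),
              show (2 : SphereRing) * (sphereY * (sphereX ^ a * sphP (m+1))) =
                sphereX ^ a * sphP (m+2) + (sphereX ^ a * sphP m - sphereX ^ (a+2) * sphP m)
                from by linear_combination (sphereX ^ a) * sphMulYP m]
            exact Submodule.smul_mem _ _ (add_mem
              (Submodule.subset_span ⟨a, m+2, Or.inl rfl⟩)
              (sub_mem (Submodule.subset_span ⟨a, m, Or.inl rfl⟩)
                (Submodule.subset_span ⟨a+2, m, Or.inl rfl⟩)))
        · cases m with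
          | zero =>
            rw [show sphereZ * (sphereX ^ a * sphP 0) = sphereX ^ a * sphQ 1 from by
              rw [sphP_zero, sphQ_one]; ring]
            exact Submodule.subset_span ⟨a, 1, Or.inr rfl⟩
          | succ m =>
            rw [half_eq (sphereZ * (sphereX ^ a * sphP (m+1))),
              show (2 : SphereRing) * (sphereZ * (sphereX ^ a * sphP (m+1))) =
                sphereX ^ a * sphQ (m+2) - (sphereX ^ a * sphQ m - sphereX ^ (a+2) * sphQ m)
                from by linear_combination (sphereX ^ a) * sphMulZP m]
            exact Submodule.smul_mem _ _ (sub_mem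
              (Submodule.subset_span ⟨a, m+2, Or.inr rfl⟩)
              (sub_mem (Submodule.subset_span ⟨a, m, Or.inr rfl⟩)
                (Submodule.subset_span ⟨a+2, m, Or.inr rfl⟩)))
      · subst hc
        rcases hg with rfl | rfl | rfl
        · rw [show sphereX * (sphereX ^ a * sphQ m) = sphereX ^ (a+1) * sphQ m from by ring]
          exact Submodule.subset_span ⟨a+1, m, Or.inr rfl⟩
        · cases m with
          | zero =>
            rw [show sphereY * (sphereX ^ a * sphQ 0) = 0 from by rw [sphQ_zero]; ring]
            exact Submodule.zero_mem _
          | succ m =>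
            rw [half_eq (sphereY * (sphereX ^ a * sphQ (m+1))),
              show (2 : SphereRing) * (sphereY * (sphereX ^ a * sphQ (m+1))) =
                sphereX ^ a * sphQ (m+2) + (sphereX ^ a * sphQ m - sphereX ^ (a+2) * sphQ m)
                from by linear_combination (sphereX ^ a) * sphMulYQ m]
            exact Submodule.smul_mem _ _ (add_mem
              (Submodule.subset_span ⟨a, m+2, Or.inr rfl⟩)
              (sub_mem (Submodule.subset_span ⟨a, m, Or.inr rfl⟩)
                (Submodule.subset_span ⟨a+2, m, Or.inr rfl⟩)))
        · cases m with
          | zero =>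
            rw [show sphereZ * (sphereX ^ a * sphQ 0) = 0 from by rw [sphQ_zero]; ring]
            exact Submodule.zero_mem _
          | succ m =>
            rw [half_eq (sphereZ * (sphereX ^ a * sphQ (m+1))),
              show (2 : SphereRing) * (sphereZ * (sphereX ^ a * sphQ (m+1))) =
                (sphereX ^ a * sphP m - sphereX ^ (a+2) * sphP m) - sphereX ^ a * sphP (m+2)
                from by linear_combination (sphereX ^ a) * sphMulZQ m]
            exact Submodule.smul_mem _ _ (sub_mem
              (sub_mem (Submodule.subset_span ⟨a, m, Or.inl rfl⟩)
                (Submodule.subset_span ⟨a+2, m, Or.inl rfl⟩))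
              (Submodule.subset_span ⟨a, m+2, Or.inl rfl⟩))
    · show g * 0 ∈ Submodule.span ℝ Bset
      rw [mul_zero]; exact Submodule.zero_mem _
    · intro u w hu hw hgu hgw
      show g * (u + w) ∈ Submodule.span ℝ Bset
      rw [mul_add]; exact add_mem hgu hgw
    · intro r u hu hgu
      show g * (r • u) ∈ Submodule.span ℝ Bset
      rw [mul_smul_comm]; exact Submodule.smul_mem _ _ hgu
  have hBtop : ∀ g : SphereRing, g ∈ Submodule.span ℝ Bset := by
    intro g
    obtain ⟨P, rfl⟩ := Ideal.Quotient.mk_surjective g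
    induction P using MvPolynomial.induction_on with
    | C r =>
      have h1 : (Ideal.Quotient.mk _ (MvPolynomial.C r) : SphereRing) =
          r • (1 : SphereRing) := by
        rw [← MvPolynomial.algebraMap_eq, ← Ideal.Quotient.algebraMap_eq,
          ← IsScalarTower.algebraMap_apply, Algebra.algebraMap_eq_smul_one]
      rw [h1]
      exact Submodule.smul_mem _ _ (Submodule.subset_span
        ⟨0, 0, Or.inl (by rw [sphP_zero, pow_zero, mul_one])⟩)
    | add p q hp hq =>
      rw [map_add]; exact Submodule.add_mem _ hp hq
    | mul_X p i hp =>
      rw [map_mul, mul_comm]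
      have hgen : (Ideal.Quotient.mk _ (MvPolynomial.X i) : SphereRing) = sphereX ∨
          (Ideal.Quotient.mk _ (MvPolynomial.X i) : SphereRing) = sphereY ∨
          (Ideal.Quotient.mk _ (MvPolynomial.X i) : SphereRing) = sphereZ := by
        fin_cases i
        · exact Or.inl rfl
        · exact Or.inr (Or.inl rfl)
        · exact Or.inr (Or.inr rfl)
      exact hmul _ hgen _ hp
  -- conclusion
  intro f g
  have hρg : ∃ r : ℝ, ρ g = r • ρ 1 := by
    refine Submodule.span_induction (p := fun v _ => ∃ r : ℝ, ρ v = r • ρ 1)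
      ?_ ?_ ?_ ?_ (hBtop g)
    · intro w hw
      obtain ⟨a, m, hc | hc⟩ := hw
      · subst hc
        cases m with
        | zero =>
          obtain ⟨r, hr⟩ := hxpow a
          exact ⟨r, by rwa [sphP_zero, mul_one]⟩
        | succ m => exact ⟨0, by rw [(key2 (m+1) (by omega) a).1, zero_smul]⟩
      · subst hc
        cases m with
        | zero => exact ⟨0, by rw [sphQ_zero, mul_zero, map_zero, zero_smul]⟩
        | succ m => exact ⟨0, by rw [(key2 (m+1) (by omega) a).2, zero_smul]⟩
    · exact ⟨0, by rw [map_zero, zero_smul]⟩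
    · rintro u w hu hw ⟨r1, h1⟩ ⟨r2, h2⟩
      exact ⟨r1 + r2, by rw [map_add, h1, h2, add_smul]⟩
    · rintro c u hu ⟨r, h⟩
      exact ⟨c * r, by rw [map_smul, h, smul_smul]⟩
  obtain ⟨r, hr⟩ := hρg
  have hcomm : ρ f * ρ 1 - ρ 1 * ρ f = 0 := by
    rw [← hrep f 1, B.one_right, map_zero]
  rw [hrep, hr, mul_smul_comm, smul_mul_assoc, ← smul_sub, hcomm, smul_zero]
/-- For any Poisson bracket on the ring of polynomials on `S²`
satisfying the su(2) relations `{x,y} = z`, `{y,z} = x`, `{z,x} = y`, every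
finite-dimensional Lie representation kills all brackets; i.e. there is no nontrivial
finite-dimensional Lie representation of the Poisson algebra of spherical harmonics. -/
theorem sphere_no_nontrivial_finite_dim_lie_rep
    (br : SphereRing →ₗ[ℝ] SphereRing →ₗ[ℝ] SphereRing)
    (anti : ∀ f g : SphereRing, br f g = - br g f)
    (jacobi : ∀ f g h : SphereRing, br f (br g h) = br (br f g) h + br g (br f h))
    (leibniz : ∀ f g h : SphereRing, br f (g * h) = br f g * h + g * br f h)
    (hxy : br sphereX sphereY = sphereZ)
    (hyz : br sphereY sphereZ = sphereX)
    (hzx : br sphereZ sphereX = sphereY) :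
    ∀ (V : Type) [AddCommGroup V] [Module ℝ V] [FiniteDimensional ℝ V]
      (ρ : SphereRing →ₗ[ℝ] Module.End ℝ V),
      (∀ f g : SphereRing, ρ (br f g) = ρ f * ρ g - ρ g * ρ f) →
      ∀ f g : SphereRing, ρ (br f g) = 0 := by
  intro V _ _ _ ρ hrep f g
  exact BrData.main ⟨br, anti, leibniz, hxy, hyz, hzx⟩ V ρ hrep f g
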